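/- Let $k \in \mathbb{N}$ and $h_1, h_2 \in \mathbb{Z}$ with $\gcd(h_1,k) = \gcd(h_2,k) = 1$. Then $\sum_{a=1}^{k-1} ((a h_1/k))((a h_2/k)) = \frac{1}{4k} \sum_{a=1}^{k-1} \cot(\pi a h_1/k) \cot(\pi a h_2/k)$. -/

import Mathlib

open scoped Classical

/-- The sawtooth function `((x))`. -/
noncomputable def saw (x : ℝ) : ℝ :=
  if ∃ m : ℤ, x = m then 0 else Int.fract x - 1 / 2

/-- The cotangent function. -/
noncomputable def cot (x : ℝ) : ℝ := Real.cos x / Real.sin x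

open scoped Real


lemma sum_cos_ne (k j : ℕ) (hj1 : 0 < j) (hj2 : j < k) :
    ∑ b ∈ Finset.range k, Real.cos (2 * π * j * b / k) = 0 := by
  have hk : 0 < k := hj1.trans hj2
  have hk0 : (k:ℝ) ≠ 0 := by positivity
  set θ : ℝ := 2 * π * j / k with hθ
  have hterm : ∀ b : ℕ, Real.cos (2 * π * j * b / k) = (Complex.exp (θ * Complex.I) ^ b).re := by
    intro b
    rw [← Complex.exp_nat_mul]
    have h1 : ((b:ℂ) * ((θ:ℝ) * Complex.I)) = ((b * θ : ℝ) : ℂ) * Complex.I := by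
      push_cast; ring
    rw [h1, Complex.exp_ofReal_mul_I_re]
    congr 1
    rw [hθ]; field_simp
  have hk0c : (k:ℂ) ≠ 0 := by exact_mod_cast (by positivity : (k:ℝ) ≠ 0)
  have hzne : Complex.exp ((θ:ℝ) * Complex.I) ≠ 1 := by
    intro hcon
    rw [Complex.exp_eq_one_iff] at hcon
    obtain ⟨n, hn⟩ := hcon
    have h2 : (θ:ℂ) = (n:ℂ) * (2 * π) := by
      have hn' : (θ:ℂ) * Complex.I = ((n:ℂ) * (2 * π)) * Complex.I := by
        rw [hn]; ring
      exact mul_right_cancel₀ Complex.I_ne_zero hn'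
    have h3 : θ = n * (2 * π) := by exact_mod_cast h2
    have hpi : (0:ℝ) < π := Real.pi_pos
    have h4 : (j:ℝ) = n * k := by
      rw [hθ] at h3
      field_simp at h3
      nlinarith [h3]
    have h5 : (j:ℤ) = n * k := by exact_mod_cast h4
    rcases lt_trichotomy n 0 with h|h|h
    · nlinarith [h5, (by exact_mod_cast hj1 : (0:ℤ) < j), (by exact_mod_cast hk : (0:ℤ) < k)]
    · simp [h] at h5; omega
    · have : 1 ≤ n := h
      nlinarith [h5, (by exact_mod_cast hj2 : (j:ℤ) < k)]
  have hpow : Complex.exp ((θ:ℝ) * Complex.I) ^ k = 1 := by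
    rw [← Complex.exp_nat_mul]
    have : (k:ℂ) * ((θ:ℝ) * Complex.I) = (j:ℤ) * (2 * π * Complex.I) := by
      rw [hθ]; push_cast; field_simp
    rw [this, Complex.exp_int_mul_two_pi_mul_I]
  calc ∑ b ∈ Finset.range k, Real.cos (2 * π * j * b / k)
      = (∑ b ∈ Finset.range k, Complex.exp ((θ:ℝ) * Complex.I) ^ b).re := by
        rw [Complex.re_sum]; exact Finset.sum_congr rfl fun b _ => hterm b
    _ = 0 := by rw [geom_sum_eq hzne, hpow]; simp

lemma sum_cos_int (k : ℕ) (hk : 0 < k) (l : ℤ) :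
    ∑ b ∈ Finset.range k, Real.cos (2 * π * l * b / k) = if (k:ℤ) ∣ l then (k:ℝ) else 0 := by
  have hk0 : (k:ℝ) ≠ 0 := by positivity
  set j : ℕ := (l % k).toNat with hj
  have hjl : (j:ℤ) = l % k := by
    rw [hj]; exact Int.toNat_of_nonneg (Int.emod_nonneg l (by exact_mod_cast hk.ne'))
  have hjk : j < k := by
    have := Int.emod_lt_of_pos l (by exact_mod_cast hk : (0:ℤ) < k)
    omega
  have hsplit : ∀ b : ℕ, Real.cos (2 * π * l * b / k) = Real.cos (2 * π * j * b / k) := by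
    intro b
    have hZ : (j:ℤ) + (l / k) * k = l := by rw [hjl]; exact Int.emod_add_ediv_mul l k
    have hlq : (l:ℝ) = (j:ℝ) + ((l / k : ℤ) : ℝ) * k := by exact_mod_cast hZ.symm
    have : 2 * π * l * b / k = 2 * π * j * b / k + ((b * (l / k) : ℤ) : ℝ) * (2 * π) := by
      rw [hlq]; push_cast; field_simp
    rw [this, Real.cos_add_int_mul_two_pi]
  rw [Finset.sum_congr rfl fun b _ => hsplit b]
  by_cases hdvd : (k:ℤ) ∣ l
  · have hj0 : j = 0 := by
      obtain ⟨c, rfl⟩ := hdvd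
      have : (k:ℤ) * c % k = 0 := Int.mul_emod_right _ _
      omega
    rw [if_pos hdvd]
    simp only [hj0, Nat.cast_zero, mul_zero, zero_mul, zero_div, Real.cos_zero,
      Finset.sum_const, Finset.card_range, nsmul_eq_mul, mul_one]
  · have hj0 : 0 < j := by
      rcases Nat.eq_zero_or_pos j with h|h
      · exfalso; apply hdvd
        have : l % k = 0 := by omega
        exact Int.dvd_of_emod_eq_zero this
      · exact h
    rw [sum_cos_ne k j hj0 hjk]
    simp [hdvd]


lemma cot_mul_sin (x : ℝ) (hx : Real.sin x ≠ 0) (j : ℕ) :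
    cot x * Real.sin (2 * j * x)
      = ∑ l ∈ Finset.range j, (Real.cos (2 * l * x) + Real.cos (2 * (l + 1) * x)) := by
  induction j with
  | zero => simp
  | succ j ih =>
    have hstep : Real.sin (2 * (j+1 : ℕ) * x)
        = Real.sin (2 * j * x) + 2 * Real.cos ((2 * j + 1) * x) * Real.sin x := by
      have h1 : (2 * (j+1 : ℕ) : ℝ) * x = (2 * j + 1) * x + x := by push_cast; ring
      have h2 : (2 * (j:ℕ) : ℝ) * x = (2 * j + 1) * x - x := by push_cast; ring
      rw [h1, h2, Real.sin_add, Real.sin_sub]; ring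
    rw [hstep, mul_add, ih, Finset.sum_range_succ]
    congr 1
    have hcc : Real.cos x * Real.cos ((2 * j + 1) * x)
        = (Real.cos (2 * j * x) + Real.cos (2 * (j + 1 : ℕ) * x)) / 2 := by
      have h1 : (2 * (j+1 : ℕ) : ℝ) * x = (2 * j + 1) * x + x := by push_cast; ring
      have h2 : (2 * (j:ℕ) : ℝ) * x = (2 * j + 1) * x - x := by push_cast; ring
      rw [h1, h2, Real.cos_add, Real.cos_sub]; ring
    have hcot : cot x * Real.sin x = Real.cos x := div_mul_cancel₀ _ hx
    calc cot x * (2 * Real.cos ((2 * j + 1) * x) * Real.sin x)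
        = (cot x * Real.sin x) * (2 * Real.cos ((2 * j + 1) * x)) := by ring
      _ = Real.cos x * (2 * Real.cos ((2 * j + 1) * x)) := by rw [hcot]
      _ = Real.cos (2 * (j:ℕ) * x) + Real.cos (2 * ((j:ℕ) + 1) * x) := by
          have hc : ((j + 1 : ℕ) : ℝ) = (j:ℝ) + 1 := by push_cast; ring
          rw [hc] at hcc
          linarith [hcc]

lemma range_eq_insert_Icc (k : ℕ) (hk : 0 < k) :
    Finset.range k = insert 0 (Finset.Icc 1 (k - 1)) := by
  ext b; simp only [Finset.mem_range, Finset.mem_insert, Finset.mem_Icc]; omega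

lemma Csum (k : ℕ) (hk : 0 < k) (l : ℕ) (hl : l < k) :
    ∑ b ∈ Finset.Icc 1 (k - 1), Real.cos (2 * π * l * b / k)
      = if l = 0 then (k:ℝ) - 1 else -1 := by
  have hfull := sum_cos_int k hk (l : ℤ)
  rw [range_eq_insert_Icc k hk, Finset.sum_insert (by simp)] at hfull
  have hcast : ∀ b : ℕ, Real.cos (2 * π * ((l:ℤ):ℝ) * b / k) = Real.cos (2 * π * (l:ℝ) * b / k) := by
    intro b; norm_num
  rw [Finset.sum_congr rfl fun b _ => hcast b] at hfull
  by_cases h0 : l = 0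
  · subst h0
    simp only [if_pos rfl]
    simp only [Int.dvd_zero, if_pos, Nat.cast_zero, Int.cast_zero, mul_zero, zero_mul,
      zero_div, Real.cos_zero] at hfull ⊢
    linarith [hfull]
  · have hnd : ¬ (k:ℤ) ∣ (l:ℤ) := by
      intro hd
      obtain ⟨c, hc⟩ := hd
      have hl0 : 0 < l := Nat.pos_of_ne_zero h0
      rcases lt_trichotomy c 0 with h|h|h
      · nlinarith [hc, (by exact_mod_cast hl0 : (0:ℤ) < l), (by exact_mod_cast hk : (0:ℤ) < k)]
      · subst h; simp at hc; omega
      · have : 1 ≤ c := h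
        nlinarith [hc, (by exact_mod_cast hl : (l:ℤ) < k)]
    rw [if_neg hnd] at hfull
    rw [if_neg h0]
    simp only [mul_zero, zero_mul, zero_div, Real.cos_zero, Nat.cast_zero] at hfull
    linarith [hfull]

lemma key_sum (k : ℕ) (j : ℕ) (hj1 : 0 < j) (hj2 : j < k) :
    ∑ b ∈ Finset.Icc 1 (k - 1), cot (π * b / k) * Real.sin (2 * π * j * b / k)
      = (k:ℝ) - 2 * j := by
  have hk : 0 < k := hj1.trans hj2
  have hkR : (0:ℝ) < k := by exact_mod_cast hk
  have hterm : ∀ b ∈ Finset.Icc 1 (k - 1),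
      cot (π * b / k) * Real.sin (2 * π * j * b / k)
        = ∑ l ∈ Finset.range j, (Real.cos (2 * π * l * b / k) + Real.cos (2 * π * (l + 1) * b / k)) := by
    intro b hb
    rw [Finset.mem_Icc] at hb
    have hb1 : 1 ≤ b := hb.1
    have hb2 : b < k := by omega
    set x : ℝ := π * b / k with hx
    have hx0 : 0 < x := by
      apply div_pos (mul_pos Real.pi_pos (by exact_mod_cast hb1)) hkR
    have hxpi : x < π := by
      rw [hx, div_lt_iff₀ hkR]
      have : (b:ℝ) < k := by exact_mod_cast hb2
      nlinarith [Real.pi_pos]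
    have hs : Real.sin x ≠ 0 := ne_of_gt (Real.sin_pos_of_pos_of_lt_pi hx0 hxpi)
    have harg : 2 * π * j * b / k = 2 * j * x := by rw [hx]; field_simp
    rw [harg, cot_mul_sin x hs j]
    apply Finset.sum_congr rfl
    intro l _
    congr 2
    · rw [hx]; field_simp
    · rw [hx]; field_simp
  rw [Finset.sum_congr rfl hterm, Finset.sum_comm]
  have hCl : ∀ l ∈ Finset.range j,
      (∑ b ∈ Finset.Icc 1 (k-1), (Real.cos (2 * π * l * b / k) + Real.cos (2 * π * (l+1) * b / k)))
        = ((if l = 0 then (k:ℝ) - 1 else -1) + (-1)) := by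
    intro l hl
    rw [Finset.mem_range] at hl
    rw [Finset.sum_add_distrib, Csum k hk l (by omega)]
    have h2 := Csum k hk (l+1) (by omega)
    rw [if_neg (by omega)] at h2
    have hcast : ∀ b : ℕ, Real.cos (2 * π * ((l:ℝ) + 1) * b / k) = Real.cos (2 * π * ((l+1:ℕ):ℝ) * b / k) := by
      intro b; push_cast; ring_nf
    rw [Finset.sum_congr rfl fun b _ => hcast b, h2]
  rw [Finset.sum_congr rfl hCl]
  have hsplit : ∀ l : ℕ, ((if l = 0 then (k:ℝ) - 1 else -1) + (-1))
      = -2 + (if l = 0 then (k:ℝ) else 0) := by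
    intro l; split <;> ring
  rw [Finset.sum_congr rfl fun l _ => hsplit l, Finset.sum_add_distrib,
    Finset.sum_const, Finset.card_range]
  rw [Finset.sum_ite_eq' (Finset.range j) 0 (fun _ => (k:ℝ))]
  rw [if_pos (Finset.mem_range.mpr hj1)]
  push_cast
  ring


lemma saw_fourier (k : ℕ) (hk : 0 < k) (m : ℤ) (hnd : ¬ (k:ℤ) ∣ m) :
    saw ((m:ℝ) / k)
      = -(1 / (2 * k)) * ∑ b ∈ Finset.Icc 1 (k - 1), cot (π * b / k) * Real.sin (2 * π * m * b / k) := by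
  have hkR : (0:ℝ) < k := by exact_mod_cast hk
  have hkZ : (0:ℤ) < k := by exact_mod_cast hk
  set j : ℕ := (m % k).toNat with hj
  have hjl : (j:ℤ) = m % k := Int.toNat_of_nonneg (Int.emod_nonneg m (by exact_mod_cast hk.ne'))
  have hjk : j < k := by
    have := Int.emod_lt_of_pos m hkZ
    omega
  have hj1 : 0 < j := by
    rcases Nat.eq_zero_or_pos j with h|h
    · exfalso; apply hnd
      apply Int.dvd_of_emod_eq_zero; omega
    · exact h
  have hZ : (j:ℤ) + (m / k) * k = m := by rw [hjl]; exact Int.emod_add_ediv_mul m k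
  -- rewrite the sines
  have hsin : ∀ b : ℕ, Real.sin (2 * π * m * b / k) = Real.sin (2 * π * j * b / k) := by
    intro b
    have hlq : (m:ℝ) = (j:ℝ) + ((m / k : ℤ) : ℝ) * k := by exact_mod_cast hZ.symm
    have harg : 2 * π * m * b / k = 2 * π * j * b / k + ((b * (m / k) : ℤ) : ℝ) * (2 * π) := by
      rw [hlq]; push_cast; field_simp
    rw [harg, Real.sin_add_int_mul_two_pi]
  rw [show (∑ b ∈ Finset.Icc 1 (k - 1), cot (π * b / k) * Real.sin (2 * π * m * b / k))
      = ∑ b ∈ Finset.Icc 1 (k - 1), cot (π * b / k) * Real.sin (2 * π * j * b / k) from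
    Finset.sum_congr rfl fun b _ => by rw [hsin b], key_sum k j hj1 hjk]
  -- LHS
  have hnint : ¬ ∃ n : ℤ, ((m:ℝ) / k) = n := by
    rintro ⟨n, hn⟩
    apply hnd
    have : (m:ℝ) = n * k := by
      field_simp at hn
      linarith [hn]
    have : m = n * k := by exact_mod_cast this
    exact ⟨n, by rw [this]; ring⟩
  rw [saw, if_neg hnint]
  have hfract : Int.fract ((m:ℝ) / k) = (j:ℝ) / k := by
    have hmk : (m:ℝ) / k = ((m / k : ℤ) : ℝ) + (j:ℝ) / k := by
      have hlq : (m:ℝ) = (j:ℝ) + ((m / k : ℤ) : ℝ) * k := by exact_mod_cast hZ.symm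
      rw [hlq]; field_simp; ring
    rw [hmk, Int.fract_intCast_add, Int.fract_eq_self.mpr]
    constructor
    · positivity
    · rw [div_lt_one hkR]; exact_mod_cast hjk
  rw [hfract]
  field_simp
  ring

lemma sin_orth (k : ℕ) (hk : 0 < k) (m n : ℤ) :
    ∑ a ∈ Finset.Icc 1 (k - 1), Real.sin (2 * π * m * a / k) * Real.sin (2 * π * n * a / k)
      = (if (k:ℤ) ∣ (m - n) then (k:ℝ) / 2 else 0) - (if (k:ℤ) ∣ (m + n) then (k:ℝ) / 2 else 0) := by
  have h0 : ∑ a ∈ Finset.Icc 1 (k - 1), Real.sin (2 * π * m * a / k) * Real.sin (2 * π * n * a / k)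
      = ∑ a ∈ Finset.range k, Real.sin (2 * π * m * a / k) * Real.sin (2 * π * n * a / k) := by
    rw [range_eq_insert_Icc k hk, Finset.sum_insert (by simp)]
    norm_num
  rw [h0]
  have hpt : ∀ a : ℕ, Real.sin (2 * π * m * a / k) * Real.sin (2 * π * n * a / k)
      = Real.cos (2 * π * ((m - n : ℤ) : ℝ) * a / k) / 2 - Real.cos (2 * π * ((m + n : ℤ) : ℝ) * a / k) / 2 := by
    intro a
    have h1 : 2 * π * ((m - n : ℤ) : ℝ) * a / k = 2 * π * m * a / k - 2 * π * n * a / k := by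
      push_cast; ring
    have h2 : 2 * π * ((m + n : ℤ) : ℝ) * a / k = 2 * π * m * a / k + 2 * π * n * a / k := by
      push_cast; ring
    rw [h1, h2, Real.cos_sub, Real.cos_add]
    ring
  rw [Finset.sum_congr rfl fun a _ => hpt a, Finset.sum_sub_distrib,
    ← Finset.sum_div, ← Finset.sum_div, sum_cos_int k hk (m - n), sum_cos_int k hk (m + n)]
  split_ifs <;> norm_num

lemma cot_add_int_pi (x : ℝ) (t : ℤ) : cot (x + t * π) = cot x := by
  unfold cot
  rw [Real.sin_add_int_mul_pi, Real.cos_add_int_mul_pi]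
  rw [mul_div_mul_left _ _ (zpow_ne_zero t (by norm_num : (-1:ℝ) ≠ 0))]

lemma cot_period (k : ℕ) (hk : 0 < k) (m j : ℤ) (hmj : m ≡ j [ZMOD k]) :
    cot (π * m / k) = cot (π * j / k) := by
  have hkR : (0:ℝ) < k := by exact_mod_cast hk
  have hdvd : (k:ℤ) ∣ m - j := Int.ModEq.dvd hmj.symm
  obtain ⟨t, ht⟩ := hdvd
  have hm : (m:ℝ) = j + t * k := by
    have : m = j + t * k := by rw [mul_comm]; omega
    exact_mod_cast this
  have : π * m / k = π * j / k + t * π := by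
    rw [hm]; field_simp
  rw [this, cot_add_int_pi]

lemma cot_pi_sub (x : ℝ) : cot (π - x) = -cot x := by
  unfold cot
  rw [Real.sin_pi_sub, Real.cos_pi_sub, neg_div]

lemma not_dvd_mul_of_coprime (k : ℕ) (h : ℤ) (hco : Int.gcd h k = 1) (a : ℕ)
    (ha1 : 1 ≤ a) (ha2 : a ≤ k - 1) (hk : 0 < k) : ¬ (k:ℤ) ∣ (a : ℤ) * h := by
  intro hdvd
  have hcop : IsCoprime (k:ℤ) h := Int.isCoprime_iff_gcd_eq_one.mpr (by rw [Int.gcd_comm]; exact hco)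
  have hka : (k:ℤ) ∣ (a:ℤ) := hcop.dvd_of_dvd_mul_right hdvd
  have := Int.le_of_dvd (by exact_mod_cast ha1 : (0:ℤ) < a) hka
  have hak : (a:ℤ) < k := by exact_mod_cast (by omega : a < k)
  omega

lemma toNat_emod_cast (k : ℕ) (hk : 0 < k) (x : ℤ) : (((x % k).toNat : ℤ)) = x % k :=
  Int.toNat_of_nonneg (Int.emod_nonneg x (by exact_mod_cast hk.ne'))

lemma toNat_emod_modeq (k : ℕ) (hk : 0 < k) (x : ℤ) : (((x % k).toNat : ℤ)) ≡ x [ZMOD k] := by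
  have : (((x % k).toNat : ℤ)) % k = x % k := by
    rw [toNat_emod_cast k hk]
    exact Int.emod_emod_of_dvd x dvd_rfl
  exact this

lemma toNat_emod_mem (k : ℕ) (hk : 0 < k) (x : ℤ) (hnd : ¬ (k:ℤ) ∣ x) :
    (x % k).toNat ∈ Finset.Icc 1 (k - 1) := by
  rw [Finset.mem_Icc]
  have h1 := Int.emod_nonneg x (by exact_mod_cast hk.ne' : (k:ℤ) ≠ 0)
  have h2 := Int.emod_lt_of_pos x (by exact_mod_cast hk : (0:ℤ) < k)
  have h3 : x % k ≠ 0 := fun h => hnd (Int.dvd_of_emod_eq_zero h)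
  omega

lemma dvd_small_eq (k c d : ℕ) (hc1 : 1 ≤ c) (hc : c ≤ k - 1) (hd1 : 1 ≤ d) (hd : d ≤ k - 1)
    (hk : 0 < k) (h : (k:ℤ) ∣ (c:ℤ) - d) : c = d := by
  have hcz : (c:ℤ) < k := by exact_mod_cast (by omega : c < k)
  have hdz : (d:ℤ) < k := by exact_mod_cast (by omega : d < k)
  have hcz0 : (0:ℤ) ≤ c := by positivity
  have hdz0 : (0:ℤ) ≤ d := by positivity
  rcases lt_trichotomy ((c:ℤ) - d) 0 with h0|h0|h0
  · have h4 := Int.le_of_dvd (by omega) (dvd_neg.mpr h)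
    omega
  · omega
  · have h4 := Int.le_of_dvd h0 h
    omega

lemma dvd_of_dvd_mul_inv (k : ℕ) (h w x : ℤ) (hw : (k:ℤ) ∣ h * w - 1)
    (hd : (k:ℤ) ∣ x * w) : (k:ℤ) ∣ x := by
  have h1 : (k:ℤ) ∣ x * w * h := hd.mul_right h
  have h2 : x = x * w * h - x * (h * w - 1) := by ring
  rw [h2]; exact dvd_sub h1 (hw.mul_left x)

theorem dedekind_homogeneous (k : ℕ) (hk : 0 < k) (h₁ h₂ : ℤ)
    (hco₁ : Int.gcd h₁ k = 1) (hco₂ : Int.gcd h₂ k = 1) :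
    ∑ a ∈ Finset.Icc 1 (k - 1), saw (a * (h₁ : ℝ) / k) * saw (a * (h₂ : ℝ) / k)
      = 1 / (4 * k) *
          ∑ a ∈ Finset.Icc 1 (k - 1), cot (Real.pi * a * (h₁ : ℝ) / k) * cot (Real.pi * a * (h₂ : ℝ) / k) := by
  have hkR : (0:ℝ) < k := by exact_mod_cast hk
  have hkR0 : (k:ℝ) ≠ 0 := ne_of_gt hkR
  set S := Finset.Icc 1 (k - 1) with hS
  -- inverse of h₂ mod k
  obtain ⟨u, v, huv⟩ := Int.isCoprime_iff_gcd_eq_one.mpr hco₂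
  have hw : (k:ℤ) ∣ h₂ * u - 1 := ⟨-v, by linear_combination huv⟩
  set w : ℤ := u with hwdef
  -- basic facts about members of S
  have hmem : ∀ b ∈ S, 1 ≤ b ∧ b ≤ k - 1 := fun b hb => Finset.mem_Icc.mp hb
  have hnd₁ : ∀ b ∈ S, ¬ (k:ℤ) ∣ (b:ℤ) * h₁ := fun b hb =>
    not_dvd_mul_of_coprime k h₁ hco₁ b (hmem b hb).1 (hmem b hb).2 hk
  have hnd₂ : ∀ b ∈ S, ¬ (k:ℤ) ∣ (b:ℤ) * h₂ := fun b hb =>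
    not_dvd_mul_of_coprime k h₂ hco₂ b (hmem b hb).1 (hmem b hb).2 hk
  have hndw : ∀ b ∈ S, ¬ (k:ℤ) ∣ (b:ℤ) * h₁ * w := by
    intro b hb hd
    exact hnd₁ b hb (dvd_of_dvd_mul_inv k h₂ w _ hw hd)
  set c0 : ℕ → ℕ := fun b => (((b:ℤ) * h₁ * w) % k).toNat with hc0def
  have hc0mem : ∀ b ∈ S, c0 b ∈ S := fun b hb => toNat_emod_mem k hk _ (hndw b hb)
  have hc0eq : ∀ b : ℕ, ((c0 b : ℤ)) ≡ (b:ℤ) * h₁ * w [ZMOD k] :=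
    fun b => toNat_emod_modeq k hk _
  have hP : ∀ b ∈ S, (k:ℤ) ∣ (b:ℤ) * h₁ - (c0 b : ℤ) * h₂ := by
    intro b hb
    have hd1 : (k:ℤ) ∣ (b:ℤ) * h₁ * w - (c0 b : ℤ) := (hc0eq b).dvd
    have he : (b:ℤ) * h₁ - (c0 b : ℤ) * h₂
        = h₂ * ((b:ℤ) * h₁ * w - (c0 b : ℤ)) - (b:ℤ) * h₁ * (h₂ * w - 1) := by ring
    rw [he]
    exact dvd_sub (hd1.mul_left h₂) (hw.mul_left _)
  -- step C : collapse the inner sum over c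
  have stepC : ∀ b ∈ S,
      (∑ c ∈ S, cot (π * b / k) * cot (π * c / k) *
        ((if (k:ℤ) ∣ ((b:ℤ) * h₁ - (c:ℤ) * h₂) then (k:ℝ) / 2 else 0)
          - (if (k:ℤ) ∣ ((b:ℤ) * h₁ + (c:ℤ) * h₂) then (k:ℝ) / 2 else 0)))
      = cot (π * b / k) * ((k:ℝ) * cot (π * (c0 b) / k)) := by
    intro b hb
    have hsplit : ∀ c ∈ S, cot (π * b / k) * cot (π * c / k) *
        ((if (k:ℤ) ∣ ((b:ℤ) * h₁ - (c:ℤ) * h₂) then (k:ℝ) / 2 else 0)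
          - (if (k:ℤ) ∣ ((b:ℤ) * h₁ + (c:ℤ) * h₂) then (k:ℝ) / 2 else 0))
        = (cot (π * b / k) * cot (π * c / k) * (if (k:ℤ) ∣ ((b:ℤ) * h₁ - (c:ℤ) * h₂) then (k:ℝ) / 2 else 0))
          - (cot (π * b / k) * cot (π * c / k) * (if (k:ℤ) ∣ ((b:ℤ) * h₁ + (c:ℤ) * h₂) then (k:ℝ) / 2 else 0)) := by
      intro c _; ring
    rw [Finset.sum_congr rfl hsplit, Finset.sum_sub_distrib]
    have hX : (∑ c ∈ S, cot (π * b / k) * cot (π * c / k) *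
        (if (k:ℤ) ∣ ((b:ℤ) * h₁ - (c:ℤ) * h₂) then (k:ℝ) / 2 else 0))
        = cot (π * b / k) * cot (π * (c0 b) / k) * ((k:ℝ) / 2) := by
      rw [Finset.sum_eq_single_of_mem (c0 b) (hc0mem b hb)]
      · rw [if_pos (hP b hb)]
      · intro c hc hne
        rw [if_neg, mul_zero]
        intro hdd
        apply hne
        have : (k:ℤ) ∣ ((c:ℤ) - (c0 b)) * h₂ := by
          have he : ((c:ℤ) - (c0 b)) * h₂
              = ((b:ℤ) * h₁ - (c0 b : ℤ) * h₂) - ((b:ℤ) * h₁ - (c:ℤ) * h₂) := by ring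
          rw [he]; exact dvd_sub (hP b hb) hdd
        have hcop : IsCoprime (k:ℤ) h₂ := Int.isCoprime_iff_gcd_eq_one.mpr
          (by rw [Int.gcd_comm]; exact hco₂)
        have hdc : (k:ℤ) ∣ (c:ℤ) - (c0 b) := hcop.dvd_of_dvd_mul_right this
        exact dvd_small_eq k c (c0 b) (hmem c hc).1 (hmem c hc).2
          (hmem _ (hc0mem b hb)).1 (hmem _ (hc0mem b hb)).2 hk hdc
    have hc0b := hmem _ (hc0mem b hb)
    have hc1mem : (k - c0 b) ∈ S := by rw [hS, Finset.mem_Icc]; omega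
    have hc1cast : ((k - c0 b : ℕ) : ℝ) = (k:ℝ) - (c0 b : ℕ) := by
      have : (c0 b) ≤ k := by omega
      push_cast [this]; ring
    have hc1castZ : ((k - c0 b : ℕ) : ℤ) = (k:ℤ) - (c0 b : ℕ) := by
      have : (c0 b) ≤ k := by omega
      push_cast [this]; ring
    have hQ : (k:ℤ) ∣ (b:ℤ) * h₁ + ((k - c0 b : ℕ) : ℤ) * h₂ := by
      rw [hc1castZ]
      have he : (b:ℤ) * h₁ + ((k:ℤ) - (c0 b : ℕ)) * h₂
          = ((b:ℤ) * h₁ - (c0 b : ℤ) * h₂) + (k:ℤ) * h₂ := by ring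
      rw [he]; exact dvd_add (hP b hb) (dvd_mul_right _ _)
    have hY : (∑ c ∈ S, cot (π * b / k) * cot (π * c / k) *
        (if (k:ℤ) ∣ ((b:ℤ) * h₁ + (c:ℤ) * h₂) then (k:ℝ) / 2 else 0))
        = cot (π * b / k) * (- cot (π * (c0 b) / k)) * ((k:ℝ) / 2) := by
      rw [Finset.sum_eq_single_of_mem (k - c0 b) hc1mem]
      · rw [if_pos hQ]
        congr 2
        have harg : π * ((k - c0 b : ℕ) : ℝ) / k = π - π * (c0 b) / k := by
          rw [hc1cast]; field_simp
        rw [harg, cot_pi_sub]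
      · intro c hc hne
        rw [if_neg, mul_zero]
        intro hdd
        apply hne
        have : (k:ℤ) ∣ ((c:ℤ) - (k - c0 b : ℕ)) * h₂ := by
          have he : ((c:ℤ) - (k - c0 b : ℕ)) * h₂
              = ((b:ℤ) * h₁ + (c:ℤ) * h₂) - ((b:ℤ) * h₁ + ((k - c0 b : ℕ):ℤ) * h₂) := by ring
          rw [he]; exact dvd_sub hdd hQ
        have hcop : IsCoprime (k:ℤ) h₂ := Int.isCoprime_iff_gcd_eq_one.mpr
          (by rw [Int.gcd_comm]; exact hco₂)
        have hdc : (k:ℤ) ∣ (c:ℤ) - (k - c0 b : ℕ) := hcop.dvd_of_dvd_mul_right this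
        exact dvd_small_eq k c (k - c0 b) (hmem c hc).1 (hmem c hc).2
          (hmem _ hc1mem).1 (hmem _ hc1mem).2 hk hdc
    rw [hX, hY]
    ring
  -- step 1 : Fourier expansion of each saw product
  have step1 : ∀ a ∈ S, saw (a * (h₁:ℝ) / k) * saw (a * (h₂:ℝ) / k)
      = (1/(2*(k:ℝ))) * (1/(2*(k:ℝ))) *
        ((∑ b ∈ S, cot (π * b / k) * Real.sin (2 * π * (((b:ℤ) * h₁ : ℤ):ℝ) * a / k)) *
         (∑ c ∈ S, cot (π * c / k) * Real.sin (2 * π * (((c:ℤ) * h₂ : ℤ):ℝ) * a / k))) := by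
    intro a ha
    have e₁ := saw_fourier k hk ((a:ℤ) * h₁) (hnd₁ a ha)
    have e₂ := saw_fourier k hk ((a:ℤ) * h₂) (hnd₂ a ha)
    have c₁ : ((((a:ℤ) * h₁ : ℤ)):ℝ) / k = (a:ℝ) * (h₁:ℝ) / k := by push_cast; ring
    have c₂ : ((((a:ℤ) * h₂ : ℤ)):ℝ) / k = (a:ℝ) * (h₂:ℝ) / k := by push_cast; ring
    rw [c₁] at e₁
    rw [c₂] at e₂
    rw [e₁, e₂]
    have hs₁ : (∑ b ∈ S, cot (π * b / k) * Real.sin (2 * π * (((a:ℤ) * h₁ : ℤ):ℝ) * b / k))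
        = (∑ b ∈ S, cot (π * b / k) * Real.sin (2 * π * (((b:ℤ) * h₁ : ℤ):ℝ) * a / k)) := by
      refine Finset.sum_congr rfl fun b _ => ?_
      congr 1
      congr 1
      push_cast; ring
    have hs₂ : (∑ c ∈ S, cot (π * c / k) * Real.sin (2 * π * (((a:ℤ) * h₂ : ℤ):ℝ) * c / k))
        = (∑ c ∈ S, cot (π * c / k) * Real.sin (2 * π * (((c:ℤ) * h₂ : ℤ):ℝ) * a / k)) := by
      refine Finset.sum_congr rfl fun c _ => ?_
      congr 1
      congr 1
      push_cast; ring
    rw [hs₁, hs₂]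
    ring
  -- step E : reindexing bijection for the final sum
  have hndw2 : ∀ b ∈ S, ¬ (k:ℤ) ∣ (b:ℤ) * w := by
    intro b hb hd
    have hkb : (k:ℤ) ∣ (b:ℤ) := dvd_of_dvd_mul_inv k h₂ w _ hw hd
    have hb1 := (hmem b hb).1
    have hb2 := (hmem b hb).2
    have := Int.le_of_dvd (by exact_mod_cast hb1 : (0:ℤ) < b) hkb
    have hbk : (b:ℤ) < k := by exact_mod_cast (by omega : b < k)
    omega
  have stepE : (∑ b ∈ S, cot (π * b / k) * cot (π * (c0 b) / k))
      = ∑ a ∈ S, cot (π * a * (h₁:ℝ) / k) * cot (π * a * (h₂:ℝ) / k) := by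
    symm
    refine Finset.sum_nbij' (fun a => (((a:ℤ) * h₂) % k).toNat)
      (fun b => (((b:ℤ) * w) % k).toNat) ?_ ?_ ?_ ?_ ?_
    · intro a ha
      exact toNat_emod_mem k hk _ (hnd₂ a ha)
    · intro b hb
      exact toNat_emod_mem k hk _ (hndw2 b hb)
    · -- left inverse
      intro a ha
      have h1 : ((((((a:ℤ) * h₂) % k).toNat : ℤ)) * w) % k = ((a:ℤ)) % k := by
        have m1 : ((((a:ℤ) * h₂) % k).toNat : ℤ) ≡ (a:ℤ) * h₂ [ZMOD k] := toNat_emod_modeq k hk _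
        have m2 : ((((a:ℤ) * h₂) % k).toNat : ℤ) * w ≡ (a:ℤ) * h₂ * w [ZMOD k] := m1.mul_right w
        have m3 : (a:ℤ) * h₂ * w ≡ (a:ℤ) [ZMOD k] := by
          rw [Int.modEq_iff_dvd]
          exact ⟨(a:ℤ) * v, by linear_combination -(a:ℤ) * huv⟩
        exact m2.trans m3
      have h' := hmem a ha
      have hak : (a:ℤ) < k := by exact_mod_cast (by omega : a < k)
      show ((((((a:ℤ) * h₂) % k).toNat : ℤ) * w) % k).toNat = a
      rw [h1, Int.emod_eq_of_lt (by positivity) hak, Int.toNat_natCast]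
    · -- right inverse
      intro b hb
      have h1 : ((((((b:ℤ) * w) % k).toNat : ℤ)) * h₂) % k = ((b:ℤ)) % k := by
        have m1 : ((((b:ℤ) * w) % k).toNat : ℤ) ≡ (b:ℤ) * w [ZMOD k] := toNat_emod_modeq k hk _
        have m2 : ((((b:ℤ) * w) % k).toNat : ℤ) * h₂ ≡ (b:ℤ) * w * h₂ [ZMOD k] := m1.mul_right h₂
        have m3 : (b:ℤ) * w * h₂ ≡ (b:ℤ) [ZMOD k] := by
          rw [Int.modEq_iff_dvd]
          exact ⟨(b:ℤ) * v, by linear_combination -(b:ℤ) * huv⟩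
        exact m2.trans m3
      have h' := hmem b hb
      have hbk : (b:ℤ) < k := by exact_mod_cast (by omega : b < k)
      show ((((((b:ℤ) * w) % k).toNat : ℤ) * h₂) % k).toNat = b
      rw [h1, Int.emod_eq_of_lt (by positivity) hbk, Int.toNat_natCast]
    · -- values agree
      intro a ha
      have m1 : ((((a:ℤ) * h₂) % k).toNat : ℤ) ≡ (a:ℤ) * h₂ [ZMOD k] := toNat_emod_modeq k hk _
      have e1 : cot (π * ((((a:ℤ) * h₂) % k).toNat : ℕ) / k) = cot (π * a * (h₂:ℝ) / k) := by
        have := cot_period k hk ((((a:ℤ) * h₂) % k).toNat : ℤ) ((a:ℤ) * h₂) m1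
        have cc1 : (π * (((((a:ℤ) * h₂) % k).toNat : ℤ)):ℝ) / k
            = π * (((((a:ℤ) * h₂) % k).toNat : ℕ):ℝ) / k := by push_cast; ring
        have cc2 : (π * ((((a:ℤ) * h₂ : ℤ)):ℝ)) / k = π * a * (h₂:ℝ) / k := by push_cast; ring
        rw [cc1, cc2] at this
        exact this
      have m2 : ((c0 ((((a:ℤ) * h₂) % k).toNat) : ℤ)) ≡ (a:ℤ) * h₁ [ZMOD k] := by
        have ma : ((c0 ((((a:ℤ) * h₂) % k).toNat) : ℤ))
            ≡ (((((a:ℤ) * h₂) % k).toNat : ℤ)) * h₁ * w [ZMOD k] := hc0eq _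
        have mb : (((((a:ℤ) * h₂) % k).toNat : ℤ)) * h₁ * w ≡ (a:ℤ) * h₂ * h₁ * w [ZMOD k] := by
          have := m1.mul_right h₁
          exact this.mul_right w
        have mc : (a:ℤ) * h₂ * h₁ * w ≡ (a:ℤ) * h₁ [ZMOD k] := by
          rw [Int.modEq_iff_dvd]
          exact ⟨(a:ℤ) * h₁ * v, by linear_combination -(a:ℤ) * h₁ * huv⟩
        exact (ma.trans mb).trans mc
      have e2 : cot (π * ((c0 ((((a:ℤ) * h₂) % k).toNat)) : ℕ) / k) = cot (π * a * (h₁:ℝ) / k) := by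
        have := cot_period k hk _ _ m2
        have cc1 : (π * (((c0 ((((a:ℤ) * h₂) % k).toNat) : ℤ)):ℝ)) / k
            = π * (((c0 ((((a:ℤ) * h₂) % k).toNat)) : ℕ):ℝ) / k := by push_cast; ring
        have cc2 : (π * ((((a:ℤ) * h₁ : ℤ)):ℝ)) / k = π * a * (h₁:ℝ) / k := by push_cast; ring
        rw [cc1, cc2] at this
        exact this
      rw [e1, e2]
      ring
  -- main calculation
  calc ∑ a ∈ S, saw (a * (h₁:ℝ) / k) * saw (a * (h₂:ℝ) / k)
      = ∑ a ∈ S, ((1/(2*(k:ℝ))) * (1/(2*(k:ℝ))) *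
        ((∑ b ∈ S, cot (π * b / k) * Real.sin (2 * π * (((b:ℤ) * h₁ : ℤ):ℝ) * a / k)) *
         (∑ c ∈ S, cot (π * c / k) * Real.sin (2 * π * (((c:ℤ) * h₂ : ℤ):ℝ) * a / k)))) :=
        Finset.sum_congr rfl step1
    _ = (1/(2*(k:ℝ))) * (1/(2*(k:ℝ))) * ∑ a ∈ S, ∑ b ∈ S, ∑ c ∈ S,
          ((cot (π * b / k) * Real.sin (2 * π * (((b:ℤ) * h₁ : ℤ):ℝ) * a / k)) *
           (cot (π * c / k) * Real.sin (2 * π * (((c:ℤ) * h₂ : ℤ):ℝ) * a / k))) := by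
        rw [Finset.mul_sum]
        refine Finset.sum_congr rfl fun a _ => ?_
        rw [Finset.sum_mul_sum]
    _ = (1/(2*(k:ℝ))) * (1/(2*(k:ℝ))) * ∑ b ∈ S, ∑ c ∈ S, ∑ a ∈ S,
          ((cot (π * b / k) * Real.sin (2 * π * (((b:ℤ) * h₁ : ℤ):ℝ) * a / k)) *
           (cot (π * c / k) * Real.sin (2 * π * (((c:ℤ) * h₂ : ℤ):ℝ) * a / k))) := by
        congr 1
        rw [Finset.sum_comm]
        refine Finset.sum_congr rfl fun b _ => ?_
        rw [Finset.sum_comm]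
    _ = (1/(2*(k:ℝ))) * (1/(2*(k:ℝ))) * ∑ b ∈ S, ∑ c ∈ S,
          (cot (π * b / k) * cot (π * c / k) *
            ∑ a ∈ S, Real.sin (2 * π * (((b:ℤ) * h₁ : ℤ):ℝ) * a / k) *
              Real.sin (2 * π * (((c:ℤ) * h₂ : ℤ):ℝ) * a / k)) := by
        congr 1
        refine Finset.sum_congr rfl fun b _ => Finset.sum_congr rfl fun c _ => ?_
        rw [Finset.mul_sum]
        refine Finset.sum_congr rfl fun a _ => ?_
        ring
    _ = (1/(2*(k:ℝ))) * (1/(2*(k:ℝ))) * ∑ b ∈ S, ∑ c ∈ S,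
          (cot (π * b / k) * cot (π * c / k) *
            ((if (k:ℤ) ∣ ((b:ℤ) * h₁ - (c:ℤ) * h₂) then (k:ℝ) / 2 else 0)
              - (if (k:ℤ) ∣ ((b:ℤ) * h₁ + (c:ℤ) * h₂) then (k:ℝ) / 2 else 0))) := by
        congr 1
        refine Finset.sum_congr rfl fun b _ => Finset.sum_congr rfl fun c _ => ?_
        congr 1
        exact sin_orth k hk ((b:ℤ) * h₁) ((c:ℤ) * h₂)
    _ = (1/(2*(k:ℝ))) * (1/(2*(k:ℝ))) * ∑ b ∈ S,
          (cot (π * b / k) * ((k:ℝ) * cot (π * (c0 b) / k))) := by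
        congr 1
        exact Finset.sum_congr rfl stepC
    _ = 1 / (4 * k) * ∑ b ∈ S, cot (π * b / k) * cot (π * (c0 b) / k) := by
        rw [Finset.mul_sum, Finset.mul_sum]
        refine Finset.sum_congr rfl fun b _ => ?_
        field_simp
        ring
    _ = 1 / (4 * k) * ∑ a ∈ S, cot (π * a * (h₁:ℝ) / k) * cot (π * a * (h₂:ℝ) / k) := by
        rw [stepE]
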